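/- For every even natural number n ≥ 2, the edge set of the complete graph K_n on n vertices can be partitioned into n/2 pairwise edge-disjoint Hamiltonian paths; that is, there exist n/2 paths in K_n, each visiting every vertex exactly once, such that every edge of K_n belongs to exactly one of these paths. -/

import Mathlib

open SimpleGraph

namespace HPD

variable {V : Type*} [DecidableEq V]

/-- Build a walk in the complete graph from a function. -/
def walkFromFn (f : ℕ → V) : (k : ℕ) → (∀ j < k, f j ≠ f (j+1)) →
    (⊤ : SimpleGraph V).Walk (f 0) (f k)
  | 0, _ => .nil
  | k+1, h => (walkFromFn f k (fun j hj => h j (Nat.lt_succ_of_lt hj))).concat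
      ((SimpleGraph.top_adj _ _).2 (h k (Nat.lt_succ_self k)))

lemma support_walkFromFn (f : ℕ → V) : ∀ (k : ℕ) (h : ∀ j < k, f j ≠ f (j+1)),
    (walkFromFn f k h).support = (List.range (k+1)).map f := by
  intro k
  induction k with
  | zero => intro h; simp [walkFromFn, List.range_succ]
  | succ k ih =>
    intro h
    rw [walkFromFn, Walk.support_concat, ih, List.range_succ (n := k+1)]
    simp

lemma edges_walkFromFn (f : ℕ → V) : ∀ (k : ℕ) (h : ∀ j < k, f j ≠ f (j+1)),
    (walkFromFn f k h).edges = (List.range k).map (fun j => s(f j, f (j+1))) := by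
  intro k
  induction k with
  | zero => intro h; simp [walkFromFn, List.range_succ]
  | succ k ih =>
    intro h
    rw [walkFromFn, Walk.edges_concat, ih, List.range_succ]
    simp

/-- The zigzag function. -/
def g (n : ℕ) (j : ℕ) : ZMod n :=
  if Even j then -((j/2 : ℕ) : ZMod n) else (((j+1)/2 : ℕ) : ZMod n)

lemma g_even (n k : ℕ) : g n (2*k) = -((k : ℕ) : ZMod n) := by
  simp [g, Nat.mul_div_cancel_left k (by norm_num : 0 < 2)]

lemma g_odd (n k : ℕ) : g n (2*k+1) = ((k+1 : ℕ) : ZMod n) := by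
  have h1 : ¬ Even (2*k+1) := by simp [Nat.even_add_one, Nat.even_iff]
  have h2 : (2*k+1+1)/2 = k+1 := by omega
  simp [g, h1, h2]

variable {n m : ℕ} [NeZero n]

/-- cast from ZMod n to Fin n -/
def φ (x : ZMod n) : Fin n := ⟨x.val, x.val_lt⟩

lemma φ_inj : Function.Injective (φ (n := n)) := by
  intro x y h
  exact ZMod.val_injective n (by simpa [φ, Fin.ext_iff] using h)

lemma φ_natCast (x : Fin n) : φ ((x.val : ℕ) : ZMod n) = x := by
  simp [φ, Fin.ext_iff, ZMod.val_cast_of_lt x.isLt]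

lemma cast_val_eq (x : ZMod n) : ((x.val : ℕ) : ZMod n) = x := by
  have := ZMod.natCast_val (R := ZMod n) x
  simpa [ZMod.cast_id] using this

lemma natCast_zero_iff (a : ℕ) : ((a : ℕ) : ZMod n) = 0 ↔ n ∣ a :=
  ZMod.natCast_eq_zero_iff a n

/-- vertices of path i -/
def F (i : ZMod n) (j : ℕ) : Fin n := φ (i + g n j)

lemma hadj (hn : n = 2*m) (i : ZMod n) : ∀ j < n - 1, F i j ≠ F i (j+1) := by
  intro j hj h
  have h' : g n j = g n (j+1) := add_left_cancel (φ_inj h)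
  rcases Nat.even_or_odd j with ⟨k, hk⟩ | ⟨k, hk⟩
  · have hk2 : j = 2*k := by omega
    subst hk2
    rw [g_even, g_odd] at h'
    have h0 : ((2*k+1 : ℕ) : ZMod n) = 0 := by push_cast at h' ⊢; linear_combination - h'
    have hdvd := (natCast_zero_iff _).1 h0
    have h2 : (2:ℕ) ∣ 2*k+1 := Dvd.dvd.trans ⟨m, hn⟩ hdvd
    omega
  · have hk2 : j = 2*k+1 := by omega
    subst hk2
    have : 2*k+1+1 = 2*(k+1) := by ring
    rw [g_odd, this, g_even] at h'
    have h0 : ((2*(k+1) : ℕ) : ZMod n) = 0 := by push_cast at h' ⊢; linear_combination h'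
    have hdvd := (natCast_zero_iff _).1 h0
    have := Nat.le_of_dvd (by omega) hdvd
    omega

/-- the i-th Hamiltonian path -/
def W (hn : n = 2*m) (i : ZMod n) : (⊤ : SimpleGraph (Fin n)).Walk (F i 0) (F i (n-1)) :=
  walkFromFn (F i) (n-1) (hadj hn i)

lemma g_inj (hn : n = 2*m) : ∀ j1 < n, ∀ j2 < n, g n j1 = g n j2 → j1 = j2 := by
  intro j1 hj1 j2 hj2 h
  rcases Nat.even_or_odd j1 with ⟨a, ha⟩ | ⟨a, ha⟩ <;>
    rcases Nat.even_or_odd j2 with ⟨b, hb⟩ | ⟨b, hb⟩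
  · have h1 : j1 = 2*a := by omega
    have h2 : j2 = 2*b := by omega
    subst h1; subst h2
    rw [g_even, g_even, neg_inj] at h
    have := congrArg ZMod.val h
    rw [ZMod.val_cast_of_lt (by omega), ZMod.val_cast_of_lt (by omega)] at this
    omega
  · have h1 : j1 = 2*a := by omega
    have h2 : j2 = 2*b+1 := by omega
    subst h1; subst h2
    rw [g_even, g_odd] at h
    have h0 : ((a + (b+1) : ℕ) : ZMod n) = 0 := by push_cast at h ⊢; linear_combination - h
    have := Nat.le_of_dvd (by omega) ((natCast_zero_iff _).1 h0)
    omega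
  · have h1 : j1 = 2*a+1 := by omega
    have h2 : j2 = 2*b := by omega
    subst h1; subst h2
    rw [g_odd, g_even] at h
    have h0 : ((b + (a+1) : ℕ) : ZMod n) = 0 := by push_cast at h ⊢; linear_combination h
    have := Nat.le_of_dvd (by omega) ((natCast_zero_iff _).1 h0)
    omega
  · have h1 : j1 = 2*a+1 := by omega
    have h2 : j2 = 2*b+1 := by omega
    subst h1; subst h2
    rw [g_odd, g_odd] at h
    have := congrArg ZMod.val h
    rw [ZMod.val_cast_of_lt (by omega), ZMod.val_cast_of_lt (by omega)] at this
    omega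

lemma W_isHamiltonian (hn : n = 2*m) (hm : 1 ≤ m) (i : ZMod n) : (W hn i).IsHamiltonian := by
  have hsup : (W hn i).support = (List.range n).map (F i) := by
    rw [W, support_walkFromFn]
    congr 1
    congr 1
    omega
  have hnodup : (W hn i).support.Nodup := by
    rw [hsup]
    refine List.Nodup.map_on ?_ List.nodup_range
    intro x hx y hy hxy
    simp only [List.mem_range] at hx hy
    have : g n x = g n y := add_left_cancel (φ_inj hxy)
    exact g_inj hn x hx y hy this
  have hlen : (W hn i).support.length = n := by
    rw [hsup, List.length_map, List.length_range]
  have huniv : (W hn i).support.toFinset = Finset.univ := by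
    apply Finset.eq_univ_of_card
    rw [List.toFinset_card_of_nodup hnodup, hlen, Fintype.card_fin]
  intro v
  apply List.count_eq_one_of_mem hnodup
  rw [← List.mem_toFinset, huniv]
  exact Finset.mem_univ v

/-- Edge membership characterization -/
lemma mem_edges_iff (hn : n = 2*m) (hm : 1 ≤ m) (i : ZMod n) (e : Sym2 (Fin n)) :
    e ∈ (W hn i).edges ↔
      ∃ u v : ZMod n, u ≠ v ∧ e = s(φ u, φ v) ∧ (u + v = 2*i ∨ u + v = 2*i + 1) := by
  have hedges : (W hn i).edges = (List.range (n-1)).map (fun j => s(F i j, F i (j+1))) := by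
    rw [W, edges_walkFromFn]
  constructor
  · intro he
    rw [hedges, List.mem_map] at he
    obtain ⟨j, hj, hje⟩ := he
    simp only [List.mem_range] at hj
    refine ⟨i + g n j, i + g n (j+1), ?_, ?_, ?_⟩
    · intro hcontra
      exact hadj hn i j hj (by simp [F, hcontra])
    · rw [← hje]; rfl
    · rcases Nat.even_or_odd j with ⟨k, hk⟩ | ⟨k, hk⟩
      · right
        have h1 : j = 2*k := by omega
        subst h1
        rw [g_even, g_odd]
        push_cast
        ring
      · left
        have h1 : j = 2*k+1 := by omega
        have h2 : 2*k+1+1 = 2*(k+1) := by ring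
        subst h1
        rw [g_odd, h2, g_even]
        push_cast
        ring
  · rintro ⟨u, v, huv, he, hsum | hsum⟩
    -- even sum case : u + v = 2*i, edge {i+t, i-t}, t = u - i
    · have key : ∀ u v : ZMod n, u ≠ v → u + v = 2*i → 1 ≤ (u-i).val → (u-i).val < m →
          s(φ u, φ v) ∈ (W hn i).edges := by
        intro u v huv hsum h1 h2
        rw [hedges, List.mem_map]
        refine ⟨2*((u-i).val - 1) + 1, ?_, ?_⟩
        · rw [List.mem_range]; omega
        · have hk : (u-i).val - 1 + 1 = (u-i).val := by omega
          have h2' : 2*((u-i).val-1)+1+1 = 2*((u-i).val-1+1) := by ring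
          rw [F, F, g_odd, h2', g_even, hk]
          rw [cast_val_eq]
          have e1 : i + (u - i) = u := by ring
          have e2 : i + -(u - i) = v := by linear_combination -hsum
          rw [e1, e2]
      have hune : u ≠ i := by
        intro h
        apply huv
        rw [h] at hsum ⊢
        linear_combination -hsum
      have ht0 : u - i ≠ 0 := sub_ne_zero_of_ne hune
      have ht1 : 1 ≤ (u-i).val := by
        rcases Nat.eq_zero_or_pos (u-i).val with h | h
        · exact absurd (((ZMod.val_eq_zero _)).1 h) ht0
        · exact h
      have htm : (u-i).val ≠ m := by
        intro hcontra
        apply huv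
        have h2t : (2:ZMod n) * (u - i) = 0 := by
          have : ((2*m : ℕ) : ZMod n) = 0 := by rw [← hn]; exact_mod_cast ZMod.natCast_self n
          calc (2:ZMod n) * (u-i) = ((2*(u-i).val : ℕ) : ZMod n) := by
                push_cast [cast_val_eq]; ring
            _ = ((2*m : ℕ) : ZMod n) := by rw [hcontra]
            _ = 0 := this
        linear_combination h2t - hsum
      rcases lt_or_ge (u-i).val m with h | h
      · rw [he]; exact key u v huv hsum ht1 h
      · have hswap : v - i = -(u - i) := by linear_combination hsum
        have hval : (v - i).val = n - (u-i).val := by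
          rw [hswap, ZMod.neg_val, if_neg ht0]
        have h1' : 1 ≤ (v-i).val := by
          have := ZMod.val_lt (u-i); omega
        have h2' : (v-i).val < m := by omega
        rw [he, Sym2.eq_swap]
        exact key v u (Ne.symm huv) (by linear_combination hsum) h1' h2'
    -- odd sum case : u + v = 2*i+1, edge {i-k, i+k+1}, k = i - u
    · have key : ∀ u v : ZMod n, u + v = 2*i + 1 → (i-u).val < m →
          s(φ u, φ v) ∈ (W hn i).edges := by
        intro u v hsum h2
        rw [hedges, List.mem_map]
        refine ⟨2*(i-u).val, ?_, ?_⟩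
        · rw [List.mem_range]; omega
        · rw [F, F, g_even, g_odd, cast_val_eq]
          have hcast : (((i-u).val + 1 : ℕ) : ZMod n) = (i - u) + 1 := by
            push_cast [cast_val_eq]; ring
          rw [hcast]
          have e1 : i + -(i - u) = u := by ring
          have e2 : i + (i - u + 1) = v := by linear_combination -hsum
          rw [e1, e2]
      rcases lt_or_ge (i-u).val m with h | h
      · rw [he]; exact key u v hsum h
      · -- i - v = -((i-u)+1)
        have hswap : i - v = -((i - u) + 1) := by linear_combination -hsum
        have hval : (i - v).val < m := by
          rcases eq_or_ne ((i-u) + 1) 0 with h0 | h0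
          · rw [hswap, h0, neg_zero, ZMod.val_zero]; omega
          · have hval1 : ((i-u)+1).val = (i-u).val + 1 := by
              have hlt : (i-u).val + 1 < n := by
                rcases Nat.lt_or_ge ((i-u).val + 1) n with h' | h'
                · exact h'
                · exfalso; apply h0
                  have : (i-u).val = n - 1 := by have := ZMod.val_lt (i-u); omega
                  have hcast : ((i-u) : ZMod n) = ((n-1 : ℕ) : ZMod n) := by
                    rw [← cast_val_eq (i-u), this]
                  rw [hcast]
                  have hc2 : ((n-1 : ℕ) : ZMod n) + 1 = (((n-1)+1 : ℕ) : ZMod n) := by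
                    push_cast; ring
                  rw [hc2, (by omega : (n-1)+1 = n), ZMod.natCast_self]
              have hc : ((i-u)+1 : ZMod n) = (((i-u).val + 1 : ℕ) : ZMod n) := by
                push_cast [cast_val_eq]
                ring
              rw [hc, ZMod.val_cast_of_lt hlt]
            rw [hswap, ZMod.neg_val, if_neg h0, hval1]
            omega
        rw [he, Sym2.eq_swap]
        exact key v u (by linear_combination hsum) hval

end HPD

/-- for even `n ≥ 2`, the edges of the complete graph `K_n` can be
partitioned into `n/2` edge-disjoint Hamiltonian paths. -/
theorem complete_graph_hamiltonian_path_decomposition (n : ℕ) (hn : 2 ≤ n) (heven : Even n) :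
    ∃ (a b : Fin (n / 2) → Fin n)
      (w : ∀ i : Fin (n / 2), (⊤ : SimpleGraph (Fin n)).Walk (a i) (b i)),
      (∀ i, (w i).IsHamiltonian) ∧
      ∀ e ∈ (⊤ : SimpleGraph (Fin n)).edgeSet, ∃! i : Fin (n / 2), e ∈ (w i).edges := by
  haveI : NeZero n := ⟨by omega⟩
  have hnm : n = 2 * (n / 2) := by
    obtain ⟨k, hk⟩ := heven; omega
  have hm1 : 1 ≤ n / 2 := by omega
  refine ⟨fun i => HPD.F ((i.val : ℕ) : ZMod n) 0, fun i => HPD.F ((i.val : ℕ) : ZMod n) (n-1),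
    fun i => HPD.W hnm ((i.val : ℕ) : ZMod n), fun i => HPD.W_isHamiltonian hnm hm1 _, ?_⟩
  intro e he
  revert he
  induction e using Sym2.ind with
  | _ x y =>
  intro he
  rw [SimpleGraph.mem_edgeSet, SimpleGraph.top_adj] at he
  set u : ZMod n := ((x.val : ℕ) : ZMod n) with hu
  set v : ZMod n := ((y.val : ℕ) : ZMod n) with hv
  have hφu : HPD.φ u = x := HPD.φ_natCast x
  have hφv : HPD.φ v = y := HPD.φ_natCast y
  have huv : u ≠ v := by intro h; apply he; rw [← hφu, ← hφv, h]
  set sv := (u + v).val with hsv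
  have hsvlt : sv < n := ZMod.val_lt _
  have hidx : sv / 2 < n / 2 := by omega
  refine ⟨⟨sv/2, hidx⟩, ?_, ?_⟩
  · beta_reduce
    rw [HPD.mem_edges_iff hnm hm1]
    refine ⟨u, v, huv, by rw [hφu, hφv], ?_⟩
    have hcast : ((sv : ℕ) : ZMod n) = u + v := HPD.cast_val_eq _
    rcases Nat.even_or_odd sv with ⟨k, hk⟩ | ⟨k, hk⟩
    · left
      have h2 : sv = 2 * (sv/2) := by omega
      rw [← hcast]
      show ((sv : ℕ) : ZMod n) = 2 * ((sv/2 : ℕ) : ZMod n)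
      conv_lhs => rw [h2]
      push_cast
      ring
    · right
      have h2 : sv = 2 * (sv/2) + 1 := by omega
      rw [← hcast]
      show ((sv : ℕ) : ZMod n) = 2 * ((sv/2 : ℕ) : ZMod n) + 1
      conv_lhs => rw [h2]
      push_cast
      ring
  · rintro ⟨j, hj⟩ hmem
    rw [HPD.mem_edges_iff hnm hm1] at hmem
    obtain ⟨u', v', hu'v', he', hsum'⟩ := hmem
    have hxy : s(HPD.φ u, HPD.φ v) = s(HPD.φ u', HPD.φ v') := by
      rw [hφu, hφv]; exact he'
    have hsum_eq : u' + v' = u + v := by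
      rw [Sym2.eq_iff] at hxy
      rcases hxy with ⟨h1, h2⟩ | ⟨h1, h2⟩
      · rw [← HPD.φ_inj h1, ← HPD.φ_inj h2]
      · rw [← HPD.φ_inj h1, ← HPD.φ_inj h2]; ring
    rcases hsum' with h' | h'
    · have hc : u + v = ((2*j : ℕ) : ZMod n) := by
        rw [← hsum_eq, h']; push_cast; ring
      have hval := congrArg ZMod.val hc
      rw [ZMod.val_cast_of_lt (by omega), ← hsv] at hval
      rw [Fin.mk.injEq]
      omega
    · have hc : u + v = ((2*j+1 : ℕ) : ZMod n) := by
        rw [← hsum_eq, h']; push_cast; ring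
      have hval := congrArg ZMod.val hc
      rw [ZMod.val_cast_of_lt (by omega), ← hsv] at hval
      rw [Fin.mk.injEq]
      omega
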